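/- Let R and S be commutative rings with unity, f : R → S a ring homomorphism, and J a proper ideal of S. Assume J is a torsion R-module via f, i.e., for every j ∈ J there exists a regular element t of R with f(t)·j = 0. Then Z(R ⋈^f J) = {(r, f(r)+j) : r ∈ Z(R), j ∈ J} ∪ {(r, f(r)+j) : r ∈ R, j ∈ J, and there exists j' ∈ J \ {0} with j'(f(r)+j) = 0}. -/

import Mathlib

open Pointwise

/-- The amalgamation `R ⋈^f J` of `R` with `S` along the ideal `J` with respect to
`f : R →+* S`, as a subring of `R × S`. -/
def amalgamation {R S : Type*} [CommRing R] [CommRing S] (f : R →+* S) (J : Ideal S) :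
    Subring (R × S) where
  carrier := {p | ∃ j ∈ J, p.2 = f p.1 + j}
  zero_mem' := ⟨0, J.zero_mem, by simp⟩
  one_mem' := ⟨0, J.zero_mem, by simp⟩
  add_mem' := by
    rintro ⟨a, a'⟩ ⟨b, b'⟩ ⟨j, hj, h1⟩ ⟨k, hk, h2⟩
    exact ⟨j + k, J.add_mem hj hk, by simp_all; ring⟩
  neg_mem' := by
    rintro ⟨a, a'⟩ ⟨j, hj, h1⟩
    exact ⟨-j, J.neg_mem hj, by simp_all; ring⟩
  mul_mem' := by
    rintro ⟨a, a'⟩ ⟨b, b'⟩ ⟨j, hj, h1⟩ ⟨k, hk, h2⟩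
    refine ⟨f a * k + j * f b + j * k, ?_, by simp_all; ring⟩
    exact J.add_mem (J.add_mem (J.mul_mem_left _ hk) (J.mul_mem_right _ hj))
      (J.mul_mem_right _ hj)

/-- The set of zero-divisors of a commutative ring `A`. -/
def zdivSet (A : Type*) [CommRing A] : Set A := {a | ∃ b, b ≠ 0 ∧ a * b = 0}

theorem stmt2 {R S : Type*} [CommRing R] [CommRing S] (f : R →+* S) (J : Ideal S)
    (hJ : J ≠ ⊤) (htor : ∀ j ∈ J, ∃ t ∈ nonZeroDivisors R, f t * j = 0) :
    zdivSet (amalgamation f J) =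
      {x : amalgamation f J | (x : R × S).1 ∈ zdivSet R} ∪
      {x : amalgamation f J | ∃ j' ∈ J, j' ≠ 0 ∧ j' * (x : R × S).2 = 0} := by

  ext x
  obtain ⟨⟨r, s⟩, j, hj, hs⟩ := x
  simp only [Set.mem_union, Set.mem_setOf_eq]
  constructor
  · rintro ⟨⟨⟨b, s'⟩, k, hk, hs'⟩, hb0, hmul⟩
    have hmul' : (r * b, s * s') = (0 : R × S) := congrArg Subtype.val hmul
    rw [Prod.ext_iff] at hmul'
    by_cases hb : b = 0
    · right
      refine ⟨k, hk, ?_, ?_⟩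
      · intro hk0
        apply hb0
        apply Subtype.ext
        have hs'0 : s' = 0 := by
          rw [show s' = f b + k from hs', hb, hk0, map_zero, add_zero]
        show (b, s') = ((0 : amalgamation f J) : R × S)
        rw [hb, hs'0]
        rfl
      · have hsk : s' = k := by
          rw [show s' = f b + k from hs', hb, map_zero, zero_add]
        rw [mul_comm, ← hsk]
        simpa using hmul'.2
    · exact Or.inl ⟨b, hb, hmul'.1⟩
  · rintro (⟨b, hb, hrb⟩ | ⟨j', hj', hj'0, hmul⟩)
    · obtain ⟨t, ht, htj⟩ := htor (j * f b) (J.mul_mem_right _ hj)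
      refine ⟨⟨(b * t, f (b * t)), 0, J.zero_mem, by simp⟩, ?_, ?_⟩
      · intro h
        have hbt : b * t = 0 := congrArg (Prod.fst ∘ Subtype.val) h
        exact hb (ht.2 b hbt)
      · apply Subtype.ext
        have hs2 : s = f r + j := hs
        have h1 : r * (b * t) = 0 := by rw [← mul_assoc, hrb, zero_mul]
        have h2 : s * f (b * t) = 0 := by
          rw [hs2, map_mul]
          calc (f r + j) * (f b * f t) = f t * (f (r * b)) + f t * (j * f b) := by
                rw [map_mul]; ring
            _ = 0 := by rw [hrb, map_zero, htj]; ring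
        have : (r * (b * t), s * f (b * t)) = (0 : R × S) := by
          rw [Prod.ext_iff]
          exact ⟨by simpa using h1, by simpa using h2⟩
        exact this
    · refine ⟨⟨(0, j'), j', hj', by simp⟩, ?_, ?_⟩
      · intro h
        exact hj'0 (congrArg (Prod.snd ∘ Subtype.val) h)
      · apply Subtype.ext
        have : (r * 0, s * j') = (0 : R × S) := by
          have h2 : s * j' = 0 := by rw [mul_comm]; exact hmul
          rw [Prod.ext_iff]
          exact ⟨by simp, by simpa using h2⟩
        exact this
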